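/- arXiv:2102.05255 — 6 statements merged into one kernel-verified Lean document; each statement's English description precedes it below -/
import Mathlib

section
/- Let U, V be bounded linear operators on a Hilbert space H. If the range of U is contained in the range of V, then there exists λ > 0 such that U U* ≤ λ² V V* (as positive operators). -/
open scoped Pointwise

noncomputable section

variable {H : Type*} [NormedAddCommGroup H] [InnerProductSpace ℂ H] [CompleteSpace H]

theorem stmt0 (U V : H →L[ℂ] H) (h : Set.range U ⊆ Set.range V) :
    ∃ c : ℝ, 0 < c ∧
      ((c ^ 2 : ℂ) • (V ∘L ContinuousLinearMap.adjoint V)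
        - U ∘L ContinuousLinearMap.adjoint U).IsPositive := by
  classical
  set N : Submodule ℂ H := LinearMap.ker (V : H →ₗ[ℂ] H) with hN
  have hNc : IsClosed (N : Set H) := ContinuousLinearMap.isClosed_ker V
  haveI : CompleteSpace N := hNc.completeSpace_coe
  set K : Submodule ℂ H := Nᗮ with hKdef
  have hKc : IsClosed (K : Set H) := N.isClosed_orthogonal
  -- projection onto K = id - proj N
  let P : H → H := fun y => y - (N.orthogonalProjectionOnto y : H)
  have hPK : ∀ y, P y ∈ K := fun y => N.sub_starProjection_mem_orthogonal y
  have hVP : ∀ y, V (P y) = V y := by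
    intro y
    have : V ((N.orthogonalProjectionOnto y : H)) = 0 := (N.orthogonalProjectionOnto y).2
    simp only [P, map_sub, this, sub_zero]
  -- uniqueness in K
  have huniq : ∀ a b, a ∈ K → b ∈ K → V a = V b → a = b := by
    intro a b ha hb hab
    have hmem : a - b ∈ N ⊓ K := by
      refine ⟨?_, K.sub_mem ha hb⟩
      simp [hN, LinearMap.mem_ker, map_sub, hab]
    have : N ⊓ K = ⊥ := N.inf_orthogonal_eq_bot
    rw [this, Submodule.mem_bot] at hmem
    exact sub_eq_zero.mp hmem
  -- the lift function
  let f : H → H := fun x => P (Classical.choose (h ⟨x, rfl⟩))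
  have hfK : ∀ x, f x ∈ K := fun x => hPK _
  have hVf : ∀ x, V (f x) = U x := by
    intro x
    rw [hVP]
    exact Classical.choose_spec (h ⟨x, rfl⟩)
  have hf_unique : ∀ x y, y ∈ K → V y = U x → y = f x := by
    intro x y hy hVy
    exact huniq y (f x) hy (hfK x) (by rw [hVy, hVf])
  -- linearity
  let T : H →ₗ[ℂ] H :=
    { toFun := f
      map_add' := by
        intro x y
        refine (hf_unique (x + y) (f x + f y) (K.add_mem (hfK x) (hfK y)) ?_).symm
        rw [map_add, hVf, hVf, map_add]
      map_smul' := by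
        intro c x
        refine (hf_unique (c • x) (c • f x) (K.smul_mem c (hfK x)) ?_).symm
        rw [map_smul, hVf, map_smul] }
  -- continuity by the closed graph theorem
  have hTcont : Continuous T := by
    apply LinearMap.continuous_of_seq_closed_graph
    intro u x y hux huy
    have h1 : Filter.Tendsto (fun n => V (T (u n))) Filter.atTop (nhds (V y)) :=
      (V.continuous.tendsto y).comp huy
    have h2 : Filter.Tendsto (fun n => V (T (u n))) Filter.atTop (nhds (U x)) := by
      have : (fun n => V (T (u n))) = fun n => U (u n) := by
        funext n; exact hVf (u n)
      rw [this]
      exact (U.continuous.tendsto x).comp hux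
    have hVyx : V y = U x := tendsto_nhds_unique h1 h2
    have hyK : y ∈ K := by
      have : ∀ n, T (u n) ∈ (K : Set H) := fun n => hfK (u n)
      exact hKc.mem_of_tendsto huy (Filter.Eventually.of_forall this)
    exact hf_unique x y hyK hVyx
  let Tc : H →L[ℂ] H := ⟨T, hTcont⟩
  have hfac : ∀ x, V (Tc x) = U x := hVf
  -- the constant
  refine ⟨‖Tc‖ + 1, by positivity, ?_, ?_⟩
  · -- self-adjointness
    have h1 : IsSelfAdjoint (V ∘L ContinuousLinearMap.adjoint V) :=
      IsSelfAdjoint.mul_star_self V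
    have h2 : IsSelfAdjoint (U ∘L ContinuousLinearMap.adjoint U) :=
      IsSelfAdjoint.mul_star_self U
    have h3 : star ((((‖Tc‖ + 1 : ℝ) : ℂ)) ^ 2) = (((‖Tc‖ + 1 : ℝ) : ℂ)) ^ 2 := by
      rw [star_pow, Complex.star_def, Complex.conj_ofReal]
    exact ContinuousLinearMap.isSelfAdjoint_iff_isSymmetric.mp ((IsSelfAdjoint.smul h3 h1).sub h2)
  · -- positivity
    intro x
    have key : ‖ContinuousLinearMap.adjoint U x‖ ≤ (‖Tc‖ + 1) * ‖ContinuousLinearMap.adjoint V x‖ := by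
      have hU : U = V ∘L Tc := by
        ext z; exact (hfac z).symm
      have : ContinuousLinearMap.adjoint U x
          = ContinuousLinearMap.adjoint Tc (ContinuousLinearMap.adjoint V x) := by
        rw [hU, ContinuousLinearMap.adjoint_comp]; rfl
      rw [this]
      calc ‖ContinuousLinearMap.adjoint Tc (ContinuousLinearMap.adjoint V x)‖
          ≤ ‖ContinuousLinearMap.adjoint Tc‖ * ‖ContinuousLinearMap.adjoint V x‖ :=
            (ContinuousLinearMap.adjoint Tc).le_opNorm _
        _ ≤ (‖Tc‖ + 1) * ‖ContinuousLinearMap.adjoint V x‖ := by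
            apply mul_le_mul_of_nonneg_right _ (norm_nonneg _)
            rw [LinearIsometryEquiv.norm_map ContinuousLinearMap.adjoint Tc]
            linarith
    have hVV : (inner ℂ ((V ∘L ContinuousLinearMap.adjoint V) x) x : ℂ)
        = ‖ContinuousLinearMap.adjoint V x‖ ^ 2 := by
      have : ((V ∘L ContinuousLinearMap.adjoint V) x : H)
          = V (ContinuousLinearMap.adjoint V x) := rfl
      rw [this, ← ContinuousLinearMap.adjoint_inner_right, inner_self_eq_norm_sq_to_K]; norm_cast
    have hUU : (inner ℂ ((U ∘L ContinuousLinearMap.adjoint U) x) x : ℂ)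
        = ‖ContinuousLinearMap.adjoint U x‖ ^ 2 := by
      have : ((U ∘L ContinuousLinearMap.adjoint U) x : H)
          = U (ContinuousLinearMap.adjoint U x) := rfl
      rw [this, ← ContinuousLinearMap.adjoint_inner_right, inner_self_eq_norm_sq_to_K]; norm_cast
    rw [ContinuousLinearMap.reApplyInnerSelf_apply]
    simp only [ContinuousLinearMap.sub_apply, ContinuousLinearMap.smul_apply,
      inner_sub_left, inner_smul_left]
    rw [hVV, hUU]
    have hnorm : ‖ContinuousLinearMap.adjoint U x‖ ^ 2
        ≤ (‖Tc‖ + 1) ^ 2 * ‖ContinuousLinearMap.adjoint V x‖ ^ 2 := by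
      nlinarith [key, norm_nonneg (ContinuousLinearMap.adjoint V x),
        norm_nonneg (ContinuousLinearMap.adjoint U x), norm_nonneg Tc]
    have hconj : starRingEnd ℂ ((((‖Tc‖ + 1 : ℝ) : ℂ)) ^ 2) = (((‖Tc‖ + 1 : ℝ) : ℂ)) ^ 2 := by
      rw [map_pow, Complex.conj_ofReal]
    rw [hconj]
    have hcast : ((((‖Tc‖ + 1 : ℝ) : ℂ)) ^ 2 * (‖ContinuousLinearMap.adjoint V x‖ : ℂ) ^ 2
        - (‖ContinuousLinearMap.adjoint U x‖ : ℂ) ^ 2)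
        = (((‖Tc‖ + 1) ^ 2 * ‖ContinuousLinearMap.adjoint V x‖ ^ 2
            - ‖ContinuousLinearMap.adjoint U x‖ ^ 2 : ℝ) : ℂ) := by
      push_cast; ring
    rw [hcast]
    simp only [RCLike.ofReal_re, Complex.ofReal_re, RCLike.re_to_complex]
    linarith
end
end

section
/- Let U, V be bounded linear operators on a Hilbert space H. If U U* ≤ λ² V V* for some λ > 0, then there exists a bounded operator W on H with ‖W‖ ≤ λ such that U = V W. -/
open scoped Pointwise ComplexInnerProductSpace

noncomputable section

open ContinuousLinearMap

variable {H : Type*} [NormedAddCommGroup H] [InnerProductSpace ℂ H] [CompleteSpace H]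

theorem stmt1 (U V : H →L[ℂ] H) (c : ℝ) (hc : 0 < c)
    (h : ((c ^ 2 : ℂ) • (V ∘L ContinuousLinearMap.adjoint V)
        - U ∘L ContinuousLinearMap.adjoint U).IsPositive) :
    ∃ W : H →L[ℂ] H, ‖W‖ ≤ c ∧ U = V ∘L W := by
  set A := ContinuousLinearMap.adjoint V with hA
  set B := ContinuousLinearMap.adjoint U with hB
  have hineq : ∀ x : H, ‖B x‖ ≤ c * ‖A x‖ := by
    intro x
    have h2 := h.2 x
    rw [reApplyInnerSelf_apply] at h2
    have hVA : ⟪(V ∘L A) x, x⟫ = (‖A x‖ : ℂ) ^ 2 := by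
      have hV : V = ContinuousLinearMap.adjoint A := by rw [hA, adjoint_adjoint]
      rw [comp_apply, hV, adjoint_inner_left]
      exact inner_self_eq_norm_sq_to_K _
    have hUB : ⟪(U ∘L B) x, x⟫ = (‖B x‖ : ℂ) ^ 2 := by
      have hU : U = ContinuousLinearMap.adjoint B := by rw [hB, adjoint_adjoint]
      rw [comp_apply, hU, adjoint_inner_left]
      exact inner_self_eq_norm_sq_to_K _
    have hx : ((c ^ 2 : ℂ) • (V ∘L A) - U ∘L B) x
        = (c ^ 2 : ℂ) • (V ∘L A) x - (U ∘L B) x := by simp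
    rw [hx, inner_sub_left, inner_smul_left, hVA, hUB] at h2
    have hconj : (starRingEnd ℂ) ((c : ℂ) ^ 2) = ((c ^ 2 : ℝ) : ℂ) := by
      rw [← Complex.ofReal_pow, Complex.conj_ofReal]
    rw [hconj] at h2
    simp only [← Complex.ofReal_pow, ← Complex.ofReal_mul, ← Complex.ofReal_sub,
      RCLike.ofReal_re, RCLike.re_to_complex, Complex.ofReal_re] at h2
    have h4 := Real.sqrt_le_sqrt (by nlinarith : ‖B x‖ ^ 2 ≤ (c * ‖A x‖) ^ 2)
    rwa [Real.sqrt_sq (norm_nonneg _), Real.sqrt_sq (by positivity)] at h4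
  set fA := (A : H →ₗ[ℂ] H)
  set fB := (B : H →ₗ[ℂ] H)
  have hker : LinearMap.ker fA ≤ LinearMap.ker fB := by
    intro x hx
    simp only [LinearMap.mem_ker] at *
    have h1 : ‖fB x‖ ≤ 0 := by
      have := hineq x
      simp only [fA, ContinuousLinearMap.coe_coe] at hx
      simpa [hx, fB] using this
    simpa [norm_le_zero_iff] using h1
  set S := LinearMap.range fA with hS
  set g : ↥S →ₗ[ℂ] H :=
    ((LinearMap.ker fA).liftQ fB hker) ∘ₗ (fA.quotKerEquivRange.symm : ↥S →ₗ[ℂ] _) with hg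
  have hg_apply : ∀ x : H, g ⟨fA x, LinearMap.mem_range_self fA x⟩ = fB x := by
    intro x
    simp only [hg, LinearMap.comp_apply, LinearEquiv.coe_coe]
    rw [LinearMap.quotKerEquivRange_symm_apply_image fA x (LinearMap.mem_range_self fA x)]
    exact Submodule.liftQ_apply _ _ _
  have hg_bound : ∀ s : ↥S, ‖g s‖ ≤ c * ‖s‖ := by
    rintro ⟨-, x, rfl⟩
    rw [show (⟨fA x, ⟨x, rfl⟩⟩ : ↥S) = ⟨fA x, LinearMap.mem_range_self fA x⟩ from rfl,
      hg_apply x]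
    exact hineq x
  set G : ↥S →L[ℂ] H := g.mkContinuous c hg_bound with hG
  set K := S.topologicalClosure with hK
  haveI : CompleteSpace ↥K := S.isClosed_topologicalClosure.completeSpace_coe
  set e : ↥S →L[ℂ] ↥K :=
    LinearMap.mkContinuous (Submodule.inclusion S.le_topologicalClosure) 1
      (fun x => by simp [Submodule.inclusion]) with he
  have he_iso : Isometry e := fun x y => rfl
  have h_dense : DenseRange e := by
    intro y
    rw [closure_subtype]
    have himg : ((↑) '' Set.range e : Set H) = (S : Set H) := by
      ext z
      constructor
      · rintro ⟨w, ⟨s, rfl⟩, rfl⟩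
        exact s.2
      · intro hz
        exact ⟨e ⟨z, hz⟩, ⟨⟨z, hz⟩, rfl⟩, rfl⟩
    rw [himg]
    exact S.topologicalClosure_coe ▸ y.2
  set Gext := G.extend e with hGext
  have hGext_eq : ∀ s : ↥S, Gext (e s) = G s := fun s => extend_eq G h_dense he_iso.isUniformInducing s
  have hGext_bound : ∀ y : ↥K, ‖Gext y‖ ≤ c * ‖y‖ := by
    refine fun y => h_dense.induction_on y ?_ fun s => ?_
    · exact isClosed_le Gext.continuous.norm (continuous_const.mul continuous_norm)
    · rw [hGext_eq s]
      calc ‖G s‖ = ‖g s‖ := rfl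
        _ ≤ c * ‖s‖ := hg_bound s
        _ = c * ‖e s‖ := by rw [he_iso.norm_map_of_map_zero (map_zero e)]
  set D : H →L[ℂ] H := Gext.comp (Submodule.orthogonalProjection K) with hD
  have hD_norm : ‖D‖ ≤ c := by
    refine opNorm_le_bound _ hc.le fun x => ?_
    calc ‖Gext ((Submodule.orthogonalProjection K) x)‖ ≤ c * ‖(Submodule.orthogonalProjection K) x‖ :=
          hGext_bound _
      _ ≤ c * ‖x‖ := by
          have h5 : ‖(Submodule.orthogonalProjection K) x‖ ≤ ‖x‖ := by
            calc ‖(Submodule.orthogonalProjection K) x‖ ≤ ‖Submodule.orthogonalProjection K‖ * ‖x‖ :=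
                  le_opNorm _ _
              _ ≤ 1 * ‖x‖ := by
                  gcongr
                  exact Submodule.orthogonalProjection_norm_le K
              _ = ‖x‖ := one_mul _
          exact mul_le_mul_of_nonneg_left h5 hc.le
  have hDA : ∀ x : H, D (A x) = B x := by
    intro x
    have hmemS : fA x ∈ S := LinearMap.mem_range_self fA x
    have hmem : A x ∈ K := S.le_topologicalClosure hmemS
    have hproj : (Submodule.orthogonalProjection K) (A x) = ⟨A x, hmem⟩ := by
      apply Subtype.ext
      exact Submodule.starProjection_eq_self_iff.mpr hmem
    rw [hD, comp_apply, hproj]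
    have heq : (⟨A x, hmem⟩ : ↥K) = e ⟨fA x, hmemS⟩ := rfl
    rw [heq, hGext_eq]
    exact hg_apply x
  have hcomp : D ∘L A = B := ContinuousLinearMap.ext hDA
  refine ⟨ContinuousLinearMap.adjoint D, ?_, ?_⟩
  · calc ‖ContinuousLinearMap.adjoint D‖ = ‖D‖ :=
        LinearIsometryEquiv.norm_map ContinuousLinearMap.adjoint D
      _ ≤ c := hD_norm
  · have h6 := congrArg ContinuousLinearMap.adjoint hcomp
    rw [adjoint_comp, hA, adjoint_adjoint, hB, adjoint_adjoint] at h6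
    exact h6.symm
end
end

section
/- Let (f_i) be a K-frame for a Hilbert space H with bounds A, B, and let T be a bounded operator on H whose range is contained in the range of K. Then (f_i) is a T-frame for H; more precisely, there exists λ > 0 such that (A/λ²)‖T* f‖² ≤ Σ_i |⟨f, f_i⟩|² ≤ B‖f‖² for all f ∈ H. -/
open scoped Pointwise

noncomputable section

variable {H : Type*} [NormedAddCommGroup H] [InnerProductSpace ℂ H] [CompleteSpace H]

open ContinuousLinearMap in
lemma douglas (K T : H →L[ℂ] H) (hrange : Set.range T ⊆ Set.range K) :
    ∃ lam : ℝ, 0 < lam ∧ ∀ g : H, ‖adjoint T g‖ ≤ lam * ‖adjoint K g‖ := by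
  set U : Submodule ℂ H := (K.ker)ᗮ with hU
  haveI : (K.ker).topologicalClosure = K.ker :=
    (ContinuousLinearMap.isClosed_ker K).submodule_topologicalClosure_eq
  haveI : CompleteSpace (K.ker) :=
    (ContinuousLinearMap.isClosed_ker K).completeSpace_coe
  -- choice of preimage
  have hc : ∀ h : H, ∃ x : H, K x = T h := fun h => hrange ⟨h, rfl⟩
  choose c hcK using hc
  set P := U.orthogonalProjectionOnto with hP
  -- key: kernel elements project to 0
  have hker0 : ∀ z, K z = 0 → P z = 0 := by
    intro z hz
    rw [Submodule.orthogonalProjectionOnto_eq_zero_iff]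
    have : z ∈ K.ker := hz
    rw [hU, Submodule.orthogonal_orthogonal]
    exact this
  have hKP : ∀ x : H, K (P x : H) = K x := by
    intro x
    have h1 : x - (P x : H) ∈ Uᗮ := U.sub_starProjection_mem_orthogonal x
    have h1' : x - (P x : H) ∈ K.ker := by
      rw [← Submodule.orthogonal_orthogonal (K.ker)]; exact h1
    have : K (x - (P x : H)) = 0 := h1'
    rw [map_sub, sub_eq_zero] at this
    exact this.symm
  -- well-definedness / characterization
  have hchar : ∀ h y, (y ∈ U ∧ K y = T h) ↔ y = (P (c h) : H) := by
    intro h y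
    constructor
    · rintro ⟨hy, hKy⟩
      have hmem : (P (c h) : H) ∈ U := (P (c h)).2
      have hdiff : y - (P (c h) : H) ∈ K.ker := by
        have : K (y - (P (c h) : H)) = 0 := by
          rw [map_sub, hKy, hKP, hcK, sub_self]
        exact this
      have hdiff2 : y - (P (c h) : H) ∈ U := U.sub_mem hy hmem
      have : y - (P (c h) : H) = 0 := by
        have := Submodule.inner_right_of_mem_orthogonal (𝕜 := ℂ) hdiff hdiff2
        exact inner_self_eq_zero.mp this
      exact sub_eq_zero.mp this
    · rintro rfl
      exact ⟨(P (c h)).2, by rw [hKP, hcK]⟩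
  -- the linear map S
  let Slin : H →ₗ[ℂ] H :=
    { toFun := fun h => (P (c h) : H)
      map_add' := by
        intro h h'
        symm
        apply (hchar (h + h') _).mp
        refine ⟨U.add_mem (P (c h)).2 (P (c h')).2, ?_⟩
        rw [map_add, hKP, hKP, hcK, hcK, map_add]
      map_smul' := by
        intro a h
        symm
        apply (hchar (a • h) _).mp
        refine ⟨U.smul_mem a (P (c h)).2, ?_⟩
        rw [map_smul, hKP, hcK, map_smul]
        rfl }
  have hgraph : IsClosed (Slin.graph : Set (H × H)) := by
    have hset : (Slin.graph : Set (H × H)) =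
        {p : H × H | p.2 ∈ U ∧ K p.2 - T p.1 = 0} := by
      ext p
      simp only [Set.mem_setOf_eq, SetLike.mem_coe, LinearMap.mem_graph_iff, sub_eq_zero]
      constructor
      · intro hp
        rw [hp]
        exact ⟨(P (c p.1)).2, by rw [show Slin p.1 = (P (c p.1) : H) from rfl, hKP, hcK]⟩
      · rintro ⟨h1, h2⟩
        exact (hchar p.1 p.2).mp ⟨h1, h2⟩
    rw [hset]
    apply IsClosed.inter
    · exact (Submodule.isClosed_orthogonal _).preimage continuous_snd
    · exact isClosed_eq (by fun_prop) continuous_const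
  let S : H →L[ℂ] H := ⟨Slin, Slin.continuous_of_isClosed_graph hgraph⟩
  have hKS : K.comp S = T := by
    ext h
    exact (hKP (c h)).trans (hcK h)
  refine ⟨‖S‖ + 1, by positivity, fun g => ?_⟩
  have : adjoint T = (adjoint S).comp (adjoint K) := by
    rw [← hKS, ContinuousLinearMap.adjoint_comp]
  rw [this]
  calc ‖adjoint S (adjoint K g)‖ ≤ ‖adjoint S‖ * ‖adjoint K g‖ :=
        (adjoint S).le_opNorm _
    _ ≤ (‖S‖ + 1) * ‖adjoint K g‖ := by
        have h1 : ‖adjoint S‖ = ‖S‖ := ContinuousLinearMap.adjoint.norm_map S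
        have h2 : (0:ℝ) ≤ ‖adjoint K g‖ := norm_nonneg _
        nlinarith [norm_nonneg S]


theorem stmt4 (K T : H →L[ℂ] H) (f : ℕ → H) (A B : ℝ) (hA : 0 < A) (hAB : A ≤ B)
    (hframe : ∀ g : H,
      A * ‖ContinuousLinearMap.adjoint K g‖ ^ 2 ≤ ∑' i, ‖(inner ℂ g (f i) : ℂ)‖ ^ 2 ∧
      ∑' i, ‖(inner ℂ g (f i) : ℂ)‖ ^ 2 ≤ B * ‖g‖ ^ 2)
    (hrange : Set.range T ⊆ Set.range K) :
    ∃ lam : ℝ, 0 < lam ∧ ∀ g : H,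
      (A / lam ^ 2) * ‖ContinuousLinearMap.adjoint T g‖ ^ 2
        ≤ ∑' i, ‖(inner ℂ g (f i) : ℂ)‖ ^ 2 ∧
      ∑' i, ‖(inner ℂ g (f i) : ℂ)‖ ^ 2 ≤ B * ‖g‖ ^ 2 := by
  obtain ⟨lam, hlam, hmaj⟩ := douglas K T hrange
  refine ⟨lam, hlam, fun g => ⟨?_, (hframe g).2⟩⟩
  have h1 := (hframe g).1
  have h2 := hmaj g
  have h3 : ‖ContinuousLinearMap.adjoint T g‖ ^ 2 ≤ lam ^ 2 * ‖ContinuousLinearMap.adjoint K g‖ ^ 2 := by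
    nlinarith [norm_nonneg (ContinuousLinearMap.adjoint T g), norm_nonneg (ContinuousLinearMap.adjoint K g)]
  have h4 : (A / lam ^ 2) * ‖ContinuousLinearMap.adjoint T g‖ ^ 2 ≤ A * ‖ContinuousLinearMap.adjoint K g‖ ^ 2 := by
    rw [div_mul_eq_mul_div, div_le_iff₀ (by positivity)]
    nlinarith
  linarith
end
end

section
/- Let K have closed range with pseudo-inverse K†, and let (f_i) be a K-frame for H with bounds A, B. Then for every f in the range of K, A‖K†‖^{-2}‖f‖² ≤ ⟨S f, f⟩ ≤ B‖f‖², where S is the frame operator S f = Σ_i ⟨f, f_i⟩ f_i. -/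
open scoped Pointwise

noncomputable section

variable {H : Type*} [NormedAddCommGroup H] [InnerProductSpace ℂ H] [CompleteSpace H]

theorem stmt5 (K Kd S : H →L[ℂ] H) (f : ℕ → H) (A B : ℝ) (hA : 0 < A) (hAB : A ≤ B)
    (hclosed : IsClosed (Set.range K))
    (hKd : ∀ x ∈ Set.range K, K (Kd x) = x)
    (hframe : ∀ g : H,
      A * ‖ContinuousLinearMap.adjoint K g‖ ^ 2 ≤ ∑' i, ‖(inner ℂ g (f i) : ℂ)‖ ^ 2 ∧
      ∑' i, ‖(inner ℂ g (f i) : ℂ)‖ ^ 2 ≤ B * ‖g‖ ^ 2)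
    (hS : ∀ g : H, (inner ℂ (S g) g : ℂ) = ((∑' i, ‖(inner ℂ g (f i) : ℂ)‖ ^ 2 : ℝ) : ℂ)) :
    ∀ g ∈ Set.range K,
      A * (‖Kd‖ ^ 2)⁻¹ * ‖g‖ ^ 2 ≤ (inner ℂ (S g) g : ℂ).re ∧
      (inner ℂ (S g) g : ℂ).re ≤ B * ‖g‖ ^ 2 := by
  intro g hg
  have hre : (inner ℂ (S g) g : ℂ).re = ∑' i, ‖(inner ℂ g (f i) : ℂ)‖ ^ 2 := by
    rw [hS g, Complex.ofReal_re]
  have hsum_nonneg : 0 ≤ ∑' i, ‖(inner ℂ g (f i) : ℂ)‖ ^ 2 :=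
    tsum_nonneg fun i => by positivity
  have hg' : K (Kd g) = g := hKd g hg
  refine ⟨?_, hre ▸ (hframe g).2⟩
  rw [hre]
  refine le_trans ?_ (hframe g).1
  -- key : ‖g‖^2 ≤ ‖Kd‖ * ‖g‖ * ‖adjoint K g‖
  have key : ‖g‖ ^ 2 ≤ ‖Kd‖ * ‖g‖ * ‖ContinuousLinearMap.adjoint K g‖ := by
    have h1 : (‖g‖ : ℝ) ^ 2 = ‖(inner ℂ (Kd g) (ContinuousLinearMap.adjoint K g) : ℂ)‖ := by
      rw [ContinuousLinearMap.adjoint_inner_right, hg', inner_self_eq_norm_sq_to_K]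
      simp
    rw [h1]
    calc ‖(inner ℂ (Kd g) (ContinuousLinearMap.adjoint K g) : ℂ)‖
        ≤ ‖Kd g‖ * ‖ContinuousLinearMap.adjoint K g‖ := norm_inner_le_norm _ _
      _ ≤ ‖Kd‖ * ‖g‖ * ‖ContinuousLinearMap.adjoint K g‖ := by
          gcongr
          exact Kd.le_opNorm g
  rcases eq_or_lt_of_le (norm_nonneg g) with h0 | h0
  · rw [← h0]
    simp only [ne_eq, OfNat.ofNat_ne_zero, not_false_eq_true, zero_pow, mul_zero]
    positivity
  have hKdpos : 0 < ‖Kd‖ := by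
    by_contra h
    push_neg at h
    have : ‖Kd‖ = 0 := le_antisymm h (norm_nonneg _)
    rw [this] at key
    nlinarith
  have hle : ‖g‖ ≤ ‖Kd‖ * ‖ContinuousLinearMap.adjoint K g‖ := by
    have := key
    nlinarith
  have hsq : ‖g‖ ^ 2 ≤ ‖Kd‖ ^ 2 * ‖ContinuousLinearMap.adjoint K g‖ ^ 2 := by
    nlinarith [norm_nonneg g, norm_nonneg (ContinuousLinearMap.adjoint K g)]
  rw [mul_assoc]
  gcongr
  rw [inv_mul_le_iff₀ (by positivity)]
  linarith
end
end

section
/- Let (f_i) be a K-frame for a Hilbert space H with bounds A, B, and let T be a co-isometry (T T* = I) on H with TK = KT. Then (T f_i) is a K-frame for H with lower bound A and upper bound B‖T‖². -/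
open scoped Pointwise

noncomputable section

variable {H : Type*} [NormedAddCommGroup H] [InnerProductSpace ℂ H] [CompleteSpace H]

theorem stmt7 (K T : H →L[ℂ] H) (f : ℕ → H) (A B : ℝ) (hA : 0 < A) (hAB : A ≤ B)
    (hco : T ∘L ContinuousLinearMap.adjoint T = 1)
    (hcomm : T ∘L K = K ∘L T)
    (hframe : ∀ g : H,
      A * ‖ContinuousLinearMap.adjoint K g‖ ^ 2 ≤ ∑' i, ‖(inner ℂ g (f i) : ℂ)‖ ^ 2 ∧
      ∑' i, ‖(inner ℂ g (f i) : ℂ)‖ ^ 2 ≤ B * ‖g‖ ^ 2) :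
    ∀ g : H,
      A * ‖ContinuousLinearMap.adjoint K g‖ ^ 2 ≤ ∑' i, ‖(inner ℂ g (T (f i)) : ℂ)‖ ^ 2 ∧
      ∑' i, ‖(inner ℂ g (T (f i)) : ℂ)‖ ^ 2 ≤ B * ‖T‖ ^ 2 * ‖g‖ ^ 2 := by
  intro g
  set T' := ContinuousLinearMap.adjoint T
  -- T' is an isometry
  have hiso : ∀ x : H, ‖T' x‖ = ‖x‖ := by
    intro x
    have hTT : T (T' x) = x := by
      have := congrArg (fun S : H →L[ℂ] H => S x) hco
      simpa using this
    have h1 : (inner ℂ (T' x) (T' x) : ℂ) = inner ℂ x x := by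
      rw [ContinuousLinearMap.adjoint_inner_right, hTT]
    have h2 : ‖T' x‖ ^ 2 = ‖x‖ ^ 2 := by
      rw [inner_self_eq_norm_sq_to_K, inner_self_eq_norm_sq_to_K] at h1
      exact_mod_cast h1
    nlinarith [norm_nonneg (T' x), norm_nonneg x]
  -- inner ℂ g (T (f i)) = inner ℂ (T' g) (f i)
  have hinner : ∀ i, (inner ℂ g (T (f i)) : ℂ) = inner ℂ (T' g) (f i) := by
    intro i
    rw [ContinuousLinearMap.adjoint_inner_left]
  have hsum : ∑' i, ‖(inner ℂ g (T (f i)) : ℂ)‖ ^ 2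
      = ∑' i, ‖(inner ℂ (T' g) (f i) : ℂ)‖ ^ 2 := by
    congr 1; ext i; rw [hinner]
  obtain ⟨hlo, hhi⟩ := hframe (T' g)
  constructor
  · rw [hsum]
    refine le_trans ?_ hlo
    have hKT : ContinuousLinearMap.adjoint K (T' g) = T' (ContinuousLinearMap.adjoint K g) := by
      have h := congrArg ContinuousLinearMap.adjoint hcomm
      rw [ContinuousLinearMap.adjoint_comp, ContinuousLinearMap.adjoint_comp] at h
      have := congrArg (fun S : H →L[ℂ] H => S g) h
      simpa using this
    rw [hKT, hiso]
  · rw [hsum]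
    refine le_trans hhi ?_
    have h1 : ‖T' g‖ ≤ ‖T‖ * ‖g‖ := by
      calc ‖T' g‖ ≤ ‖T'‖ * ‖g‖ := T'.le_opNorm g
      _ = ‖T‖ * ‖g‖ := by rw [show ‖T'‖ = ‖T‖ from (ContinuousLinearMap.adjoint : (H →L[ℂ] H) ≃ₗᵢ⋆[ℂ] (H →L[ℂ] H)).norm_map T]
    have h2 : ‖T' g‖ ^ 2 ≤ ‖T‖ ^ 2 * ‖g‖ ^ 2 := by
      nlinarith [norm_nonneg (T' g), norm_nonneg g, norm_nonneg T]
    nlinarith [norm_nonneg (T' g)]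
end
end

section
/- Let (f_i) and (g_i) be K-frames for a Hilbert space H with synthesis operators T, L : ℓ²(ℕ) → H (so T e_i = f_i, L e_i = g_i). If T L* and L T* are positive operators, then (f_i + g_i) is a K-frame for H: there exists λ > 0 with (1/λ²)‖K* f‖² ≤ Σ_i |⟨f, f_i + g_i⟩|² ≤ (√A + √B)² ‖f‖² for all f ∈ H, where A, B are upper Bessel bounds of (f_i), (g_i). -/
open scoped Pointwise

noncomputable section

variable {H : Type*} [NormedAddCommGroup H] [InnerProductSpace ℂ H] [CompleteSpace H]

local notation "ℓ²" => lp (fun _ : ℕ => ℂ) 2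

open ContinuousLinearMap

lemma key (M : ℓ² →L[ℂ] H) (x : H) :
    ∑' i, ‖(inner ℂ x (M (lp.single 2 i (1:ℂ))) : ℂ)‖ ^ 2 = ‖adjoint M x‖ ^ 2 := by
  have h : ∀ i, ‖(inner ℂ x (M (lp.single 2 i (1:ℂ))) : ℂ)‖ = ‖(adjoint M x) i‖ := by
    intro i
    rw [← ContinuousLinearMap.adjoint_inner_left, lp.inner_single_right]
    simp [inner]
  simp_rw [h]
  have := lp.norm_rpow_eq_tsum (p := 2) (E := fun _ : ℕ => ℂ) (by norm_num) (adjoint M x)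
  simp only [ENNReal.toReal_ofNat] at this
  have h2 : ∀ y : ℝ, y ^ (2:ℕ) = y ^ (2:ℝ) := fun y => by
    rw [← Real.rpow_natCast y 2]; norm_num
  simp_rw [h2]
  exact this.symm

theorem stmt11 (K : H →L[ℂ] H) (f g : ℕ → H) (T L : ℓ² →L[ℂ] H) (A B : ℝ)
    (hT : ∀ i : ℕ, f i = T (lp.single 2 i (1 : ℂ)))
    (hL : ∀ i : ℕ, g i = L (lp.single 2 i (1 : ℂ)))
    (hKf : ∃ C : ℝ, 0 < C ∧ ∀ x : H,
        C * ‖ContinuousLinearMap.adjoint K x‖ ^ 2 ≤ ∑' i, ‖(inner ℂ x (f i) : ℂ)‖ ^ 2)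
    (hKg : ∃ C : ℝ, 0 < C ∧ ∀ x : H,
        C * ‖ContinuousLinearMap.adjoint K x‖ ^ 2 ≤ ∑' i, ‖(inner ℂ x (g i) : ℂ)‖ ^ 2)
    (hA : ∀ x : H, ∑' i, ‖(inner ℂ x (f i) : ℂ)‖ ^ 2 ≤ A * ‖x‖ ^ 2)
    (hB : ∀ x : H, ∑' i, ‖(inner ℂ x (g i) : ℂ)‖ ^ 2 ≤ B * ‖x‖ ^ 2)
    (hpos1 : (T ∘L ContinuousLinearMap.adjoint L).IsPositive)
    (hpos2 : (L ∘L ContinuousLinearMap.adjoint T).IsPositive) :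
    ∃ lam : ℝ, 0 < lam ∧ ∀ x : H,
      (1 / lam ^ 2) * ‖ContinuousLinearMap.adjoint K x‖ ^ 2
        ≤ ∑' i, ‖(inner ℂ x (f i + g i) : ℂ)‖ ^ 2 ∧
      ∑' i, ‖(inner ℂ x (f i + g i) : ℂ)‖ ^ 2
        ≤ (Real.sqrt A + Real.sqrt B) ^ 2 * ‖x‖ ^ 2 := by
  obtain ⟨C, hC, hCf⟩ := hKf
  refine ⟨1 / Real.sqrt C, by positivity, fun x => ?_⟩
  have hlam : 1 / (1 / Real.sqrt C) ^ 2 = C := by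
    rw [one_div, one_div, inv_pow, inv_inv, Real.sq_sqrt hC.le]
  -- identify sums with adjoint norms
  have hfi : ∀ i, f i + g i = (T + L) (lp.single 2 i (1:ℂ)) := by
    intro i; simp [hT i, hL i]
  have hsum : ∑' i, ‖(inner ℂ x (f i + g i) : ℂ)‖ ^ 2 = ‖adjoint (T + L) x‖ ^ 2 := by
    simp_rw [hfi]; exact key (T + L) x
  have hsumf : ∑' i, ‖(inner ℂ x (f i) : ℂ)‖ ^ 2 = ‖adjoint T x‖ ^ 2 := by
    simp_rw [hT]; exact key T x
  have hsumg : ∑' i, ‖(inner ℂ x (g i) : ℂ)‖ ^ 2 = ‖adjoint L x‖ ^ 2 := by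
    simp_rw [hL]; exact key L x
  have hadd : adjoint (T + L) x = adjoint T x + adjoint L x := by
    rw [map_add]; rfl
  set u := adjoint T x with hu
  set v := adjoint L x with hv
  -- cross term nonneg
  have hcross : 0 ≤ Complex.re (inner ℂ u v : ℂ) := by
    have : (inner ℂ u v : ℂ) = inner ℂ x ((T ∘L adjoint L) x) := by
      rw [hu, ContinuousLinearMap.adjoint_inner_left]; rfl
    rw [this]
    exact (Complex.nonneg_iff.mp (by simpa using hpos1.inner_nonneg_right x)).1
  have hexp : ‖u + v‖ ^ 2 = ‖u‖ ^ 2 + 2 * Complex.re (inner ℂ u v : ℂ) + ‖v‖ ^ 2 := by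
    exact norm_add_sq (𝕜 := ℂ) u v
  constructor
  · rw [hsum, hadd, hlam]
    have h1 : C * ‖adjoint K x‖ ^ 2 ≤ ‖u‖ ^ 2 := by rw [← hsumf]; exact hCf x
    nlinarith [sq_nonneg ‖v‖]
  · rw [hsum, hadd]
    have hule : ‖u‖ ≤ Real.sqrt A * ‖x‖ := by
      rw [← Real.sqrt_sq (norm_nonneg x), ← Real.sqrt_mul' _ (sq_nonneg ‖x‖)]
      rw [Real.le_sqrt (norm_nonneg u)]
      · rw [← hsumf]; exact hA x
      · exact le_trans (tsum_nonneg fun i => sq_nonneg _) (hA x)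
    have hvle : ‖v‖ ≤ Real.sqrt B * ‖x‖ := by
      rw [← Real.sqrt_sq (norm_nonneg x), ← Real.sqrt_mul' _ (sq_nonneg ‖x‖)]
      rw [Real.le_sqrt (norm_nonneg v)]
      · rw [← hsumg]; exact hB x
      · exact le_trans (tsum_nonneg fun i => sq_nonneg _) (hB x)
    have h2 : ‖u + v‖ ≤ (Real.sqrt A + Real.sqrt B) * ‖x‖ := by
      rw [add_mul]; exact (norm_add_le u v).trans (add_le_add hule hvle)
    calc ‖u + v‖ ^ 2 ≤ ((Real.sqrt A + Real.sqrt B) * ‖x‖) ^ 2 :=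
          pow_le_pow_left₀ (norm_nonneg _) h2 2
      _ = (Real.sqrt A + Real.sqrt B) ^ 2 * ‖x‖ ^ 2 := by ring
end
end
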